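/- For any set of desirable options D, the binary set of desirable option sets K_D is mixing if and only if D is mixing; that is, K_D is coherent and satisfies 'if B ∈ K_D and A ⊆ B ⊆ posi(A) then A ∈ K_D' if and only if D is coherent and satisfies 'posi(A) ∩ D ≠ ∅ implies A ∩ D ≠ ∅ for all finite A'. -/

import Mathlib

/-- Axiom K0: removal of the zero option. -/
def AxK0 {V : Type*} [AddCommGroup V] [Module ℝ V] (K : Set (Set V)) : Prop :=
  ∀ A ∈ K, A \ {0} ∈ K

/-- Axiom K1: the singleton of zero is not a desirable option set. -/
def AxK1 {V : Type*} [AddCommGroup V] [Module ℝ V] (K : Set (Set V)) : Prop :=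
  ({0} : Set V) ∉ K

/-- Axiom K2: singletons of (background-)positive options are desirable option sets. -/
def AxK2 {V : Type*} [AddCommGroup V] [Module ℝ V] (Vpos : Set V) (K : Set (Set V)) : Prop :=
  ∀ u ∈ Vpos, ({u} : Set V) ∈ K

/-- Axiom K3: closure under elementwise positive combinations of two members. -/
def AxK3 {V : Type*} [AddCommGroup V] [Module ℝ V] (K : Set (Set V)) : Prop :=
  ∀ A1 ∈ K, ∀ A2 ∈ K, ∀ l m : V → V → ℝ,
    (∀ u ∈ A1, ∀ v ∈ A2, 0 ≤ l u v ∧ 0 ≤ m u v ∧ 0 < l u v + m u v) →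
    {w : V | ∃ u ∈ A1, ∃ v ∈ A2, w = l u v • u + m u v • v} ∈ K

/-- Axiom K4: upward closure under inclusion (within finite option sets). -/
def AxK4 {V : Type*} [AddCommGroup V] [Module ℝ V] (K : Set (Set V)) : Prop :=
  ∀ A1 ∈ K, ∀ A2 : Set V, A2.Finite → A1 ⊆ A2 → A2 ∈ K

/-- Coherence of a set of desirable option sets (a subset of the finite option sets). -/
def CoherentK {V : Type*} [AddCommGroup V] [Module ℝ V] (Vpos : Set V)
    (K : Set (Set V)) : Prop :=
  (∀ A ∈ K, A.Finite) ∧ AxK0 K ∧ AxK1 K ∧ AxK2 Vpos K ∧ AxK3 K ∧ AxK4 K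

/-- Coherence of a set of desirable options. -/
def CoherentD {V : Type*} [AddCommGroup V] [Module ℝ V] (Vpos D : Set V) : Prop :=
  (0 : V) ∉ D ∧ Vpos ⊆ D ∧
  ∀ u ∈ D, ∀ v ∈ D, ∀ l m : ℝ, 0 ≤ l → 0 ≤ m → 0 < l + m → l • u + m • v ∈ D

/-- `K_D`: the binary set of desirable option sets generated by `D`. -/
def KD {V : Type*} [AddCommGroup V] [Module ℝ V] (D : Set V) : Set (Set V) :=
  {A | A.Finite ∧ (A ∩ D).Nonempty}

/-- `D_K`: the set of options whose singletons belong to `K`. -/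
def DK {V : Type*} [AddCommGroup V] [Module ℝ V] (K : Set (Set V)) : Set V :=
  {u | ({u} : Set V) ∈ K}

/-- A set of desirable option sets is binary if it is determined by singleton assessments. -/
def BinaryK {V : Type*} [AddCommGroup V] [Module ℝ V] (K : Set (Set V)) : Prop :=
  ∀ A : Set V, A.Finite → (A ∈ K ↔ ∃ u ∈ A, ({u} : Set V) ∈ K)

/-- `posi S`: all finite positive linear combinations of elements of `S`. -/
def Posi {V : Type*} [AddCommGroup V] [Module ℝ V] (S : Set V) : Set V :=
  {w | ∃ n : ℕ, 0 < n ∧ ∃ (l : Fin n → ℝ) (u : Fin n → V),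
    (∀ k, 0 < l k) ∧ (∀ k, u k ∈ S) ∧ w = ∑ k, l k • u k}

/-- Total set of desirable options. -/
def TotalD {V : Type*} [AddCommGroup V] [Module ℝ V] (Vpos D : Set V) : Prop :=
  CoherentD Vpos D ∧ ∀ u : V, u ≠ 0 → u ∈ D ∨ -u ∈ D

/-- Total set of desirable option sets. -/
def TotalK {V : Type*} [AddCommGroup V] [Module ℝ V] (Vpos : Set V)
    (K : Set (Set V)) : Prop :=
  CoherentK Vpos K ∧ ∀ u : V, u ≠ 0 → ({u, -u} : Set V) ∈ K

/-- Mixing set of desirable options. -/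
def MixingD {V : Type*} [AddCommGroup V] [Module ℝ V] (Vpos D : Set V) : Prop :=
  CoherentD Vpos D ∧ ∀ A : Set V, A.Finite → (Posi A ∩ D).Nonempty → (A ∩ D).Nonempty

/-- Mixing set of desirable option sets. -/
def MixingK {V : Type*} [AddCommGroup V] [Module ℝ V] (Vpos : Set V)
    (K : Set (Set V)) : Prop :=
  CoherentK Vpos K ∧
    ∀ A B : Set V, A.Finite → B ∈ K → A ⊆ B → B ⊆ Posi A → A ∈ K

/-- `V_{≤0}`: the non-positive options (zero together with the strictly negative options). -/
def Vneg {V : Type*} [AddCommGroup V] [Module ℝ V] (Vpos : Set V) : Set V :=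
  {u | u = 0 ∨ -u ∈ Vpos}

/-- The operator `RN`, adding smaller option sets by removing non-positive options. -/
def RN {V : Type*} [AddCommGroup V] [Module ℝ V] (Vpos : Set V)
    (K : Set (Set V)) : Set (Set V) :=
  {A | A.Finite ∧ ∃ B ∈ K, B \ Vneg Vpos ⊆ A ∧ A ⊆ B}


lemma subset_posi13 {V : Type*} [AddCommGroup V] [Module ℝ V] (A : Set V) :
    A ⊆ Posi A := by
  intro u hu
  refine ⟨1, one_pos, fun _ => 1, fun _ => u, fun _ => one_pos, fun _ => hu, ?_⟩
  simp

lemma cohK_of_cohD13 {V : Type*} [AddCommGroup V] [Module ℝ V] (Vpos D : Set V)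
    (hD : CoherentD Vpos D) : CoherentK Vpos (KD D) := by
  obtain ⟨h0, hpos, hcomb⟩ := hD
  refine ⟨fun A hA => hA.1, ?_, ?_, ?_, ?_, ?_⟩
  · rintro A ⟨hfin, u, huA, huD⟩
    exact ⟨hfin.diff, u, ⟨huA, fun h => h0 (h ▸ huD)⟩, huD⟩
  · rintro ⟨-, u, hu, huD⟩
    rw [Set.mem_singleton_iff.mp hu] at huD
    exact h0 huD
  · intro u hu
    exact ⟨Set.finite_singleton u, u, rfl, hpos hu⟩
  · rintro A1 ⟨hf1, u, hu1, huD⟩ A2 ⟨hf2, v, hv2, hvD⟩ l m hlm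
    constructor
    · have : {w : V | ∃ u ∈ A1, ∃ v ∈ A2, w = l u v • u + m u v • v}
          = (fun p : V × V => l p.1 p.2 • p.1 + m p.1 p.2 • p.2) '' (A1 ×ˢ A2) := by
        ext w
        constructor
        · rintro ⟨a, ha, b, hb, rfl⟩; exact ⟨(a, b), ⟨ha, hb⟩, rfl⟩
        · rintro ⟨⟨a, b⟩, ⟨ha, hb⟩, rfl⟩; exact ⟨a, ha, b, hb, rfl⟩
      rw [this]
      exact (hf1.prod hf2).image _
    · obtain ⟨hl, hm, hs⟩ := hlm u hu1 v hv2
      exact ⟨l u v • u + m u v • v, ⟨u, hu1, v, hv2, rfl⟩,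
        hcomb u huD v hvD _ _ hl hm hs⟩
  · rintro A1 ⟨-, u, hu1, huD⟩ A2 hf2 hsub
    exact ⟨hf2, u, hsub hu1, huD⟩

lemma cohD_of_cohK13 {V : Type*} [AddCommGroup V] [Module ℝ V] (Vpos D : Set V)
    (hK : CoherentK Vpos (KD D)) : CoherentD Vpos D := by
  obtain ⟨-, -, hK1, hK2, hK3, -⟩ := hK
  have h0 : (0 : V) ∉ D := fun h => hK1 ⟨Set.finite_singleton 0, 0, rfl, h⟩
  refine ⟨h0, ?_, ?_⟩
  · intro u hu
    obtain ⟨-, x, hx, hxD⟩ := hK2 u hu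
    rwa [Set.mem_singleton_iff.mp hx] at hxD
  · intro u hu v hv l m hl hm hs
    have h1 : ({u} : Set V) ∈ KD D := ⟨Set.finite_singleton u, u, rfl, hu⟩
    have h2 : ({v} : Set V) ∈ KD D := ⟨Set.finite_singleton v, v, rfl, hv⟩
    have := hK3 _ h1 _ h2 (fun _ _ => l) (fun _ _ => m)
      (fun _ _ _ _ => ⟨hl, hm, hs⟩)
    obtain ⟨-, w, ⟨a, ha, b, hb, rfl⟩, hwD⟩ := this
    rw [Set.mem_singleton_iff.mp ha, Set.mem_singleton_iff.mp hb] at hwD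
    exact hwD

theorem stmt13 {V : Type*} [AddCommGroup V] [Module ℝ V]
    (Vpos D : Set V) :
    MixingK Vpos (KD D) ↔ MixingD Vpos D := by
  constructor
  · rintro ⟨hcoh, hmix⟩
    refine ⟨cohD_of_cohK13 Vpos D hcoh, ?_⟩
    intro A hAfin ⟨w, hwP, hwD⟩
    have hB : (A ∪ {w}) ∈ KD D :=
      ⟨hAfin.union (Set.finite_singleton w), w, Or.inr rfl, hwD⟩
    have hsub2 : A ∪ {w} ⊆ Posi A := by
      intro x hx
      rcases hx with hx | hx
      · exact subset_posi13 A hx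
      · exact Set.mem_singleton_iff.mp hx ▸ hwP
    exact (hmix A (A ∪ {w}) hAfin hB Set.subset_union_left hsub2).2
  · rintro ⟨hcoh, hmix⟩
    refine ⟨cohK_of_cohD13 Vpos D hcoh, ?_⟩
    rintro A B hAfin ⟨-, w, hwB, hwD⟩ hAB hBP
    exact ⟨hAfin, hmix A hAfin ⟨w, hBP hwB, hwD⟩⟩
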